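/- Let p be a projection and e an effect on a complex Hilbert space H; set d := pep⊥ + p⊥ep and b := (d²)^{1/2}, and suppose that p has rank one (the range of p is one-dimensional) and pe ≠ ep. Let k be any self-adjoint operator with k² = 1 and d = bk = kb, and set v := kpk. Then v is a rank-one projection, pv = 0, and there exists a real number β with 0 < β ≤ 1 such that b = β(p + v). -/

import Mathlib

open scoped InnerProductSpace ComplexConjugate

set_option maxHeartbeats 2000000
set_option synthInstance.maxHeartbeats 1000000

section Aux

variable {H : Type*} [NormedAddCommGroup H] [InnerProductSpace ℂ H]

/-- Pythagoras-type identity for a symmetric idempotent. -/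
lemma aux_proj_inner (P : H →L[ℂ] H)
    (hS : ∀ x y : H, ⟪P x, y⟫_ℂ = ⟪x, P y⟫_ℂ) (h2 : ∀ x, P (P x) = P x) (y : H) :
    ⟪y - P y, y - P y⟫_ℂ = ⟪y, y⟫_ℂ - ⟪P y, P y⟫_ℂ := by
  have h1 : ⟪P y, P y⟫_ℂ = ⟪y, P y⟫_ℂ := by rw [hS, h2]
  have h3 : ⟪P y, y⟫_ℂ = ⟪y, P y⟫_ℂ := hS y y
  rw [inner_sub_sub_self, h1, h3]
  ring

end Aux

theorem stmt15 {H : Type*} [NormedAddCommGroup H] [InnerProductSpace ℂ H] [CompleteSpace H]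
    (p e b k : H →L[ℂ] H)
    (hp : IsSelfAdjoint p) (hp2 : p ^ 2 = p)
    (hrank : Module.finrank ℂ (LinearMap.range (p : H →ₗ[ℂ] H)) = 1)
    (he0 : 0 ≤ e) (he1 : e ≤ 1)
    (hpe : p * e ≠ e * p)
    (hb0 : 0 ≤ b) (hb2 : b ^ 2 = (p * e * (1 - p) + (1 - p) * e * p) ^ 2)
    (hk : IsSelfAdjoint k) (hk2 : k ^ 2 = 1)
    (hbk : p * e * (1 - p) + (1 - p) * e * p = b * k)
    (hkb : p * e * (1 - p) + (1 - p) * e * p = k * b) :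
    (IsSelfAdjoint (k * p * k) ∧ (k * p * k) ^ 2 = k * p * k ∧
      Module.finrank ℂ (LinearMap.range ((k * p * k : H →L[ℂ] H) : H →ₗ[ℂ] H)) = 1) ∧
    p * (k * p * k) = 0 ∧
    ∃ β : ℝ, 0 < β ∧ β ≤ 1 ∧ b = β • (p + k * p * k) := by
  have he : IsSelfAdjoint e := IsSelfAdjoint.of_nonneg he0
  have hpS : ∀ x y : H, ⟪p x, y⟫_ℂ = ⟪x, p y⟫_ℂ :=
    (ContinuousLinearMap.isSelfAdjoint_iff_isSymmetric.mp hp)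
  have heS : ∀ x y : H, ⟪e x, y⟫_ℂ = ⟪x, e y⟫_ℂ :=
    (ContinuousLinearMap.isSelfAdjoint_iff_isSymmetric.mp he)
  have hkS : ∀ x y : H, ⟪k x, y⟫_ℂ = ⟪x, k y⟫_ℂ :=
    (ContinuousLinearMap.isSelfAdjoint_iff_isSymmetric.mp hk)
  have hp2' : ∀ x, p (p x) = p x := fun x => by
    have := DFunLike.congr_fun hp2 x
    simpa [pow_two, ContinuousLinearMap.mul_apply] using this
  have hk2' : ∀ x, k (k x) = x := fun x => by
    have := DFunLike.congr_fun hk2 x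
    simpa [pow_two, ContinuousLinearMap.mul_apply] using this
  have hpp : p * p = p := by rw [← pow_two]; exact hp2
  -- extract a unit vector spanning the range of p
  obtain ⟨ξ, hξnorm, hpx⟩ : ∃ ξ : H, ‖ξ‖ = 1 ∧ ∀ x : H, p x = ⟪ξ, x⟫_ℂ • ξ := by
    obtain ⟨ξ₀, hξ₀ne, hξ₀span⟩ := finrank_eq_one_iff'.mp hrank
    have hξ₀mem : (ξ₀ : H) ∈ LinearMap.range (p : H →ₗ[ℂ] H) := ξ₀.2
    have hξ₀ne' : (ξ₀ : H) ≠ 0 := fun h => hξ₀ne (Subtype.ext h)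
    have hn0 : (‖(ξ₀ : H)‖ : ℂ) ≠ 0 := by
      exact_mod_cast norm_ne_zero_iff.mpr hξ₀ne'
    refine ⟨(‖(ξ₀ : H)‖ : ℂ)⁻¹ • (ξ₀ : H), ?_, ?_⟩
    · rw [norm_smul]
      simp [norm_inv, inv_mul_cancel₀ (norm_ne_zero_iff.mpr hξ₀ne')]
    · set ξ : H := (‖(ξ₀ : H)‖ : ℂ)⁻¹ • (ξ₀ : H) with hξdef
      have hξnorm : ‖ξ‖ = 1 := by
        rw [hξdef, norm_smul]
        simp [norm_inv, inv_mul_cancel₀ (norm_ne_zero_iff.mpr hξ₀ne')]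
      have hξself : ⟪ξ, ξ⟫_ℂ = 1 := by
        rw [inner_self_eq_norm_sq_to_K, hξnorm]; norm_num
      have hpfix : ∀ y : H, y ∈ LinearMap.range (p : H →ₗ[ℂ] H) → p y = y := by
        rintro y ⟨z, rfl⟩; exact hp2' z
      have hξmem : ξ ∈ LinearMap.range (p : H →ₗ[ℂ] H) := Submodule.smul_mem _ _ hξ₀mem
      have hpξ : p ξ = ξ := hpfix ξ hξmem
      intro x
      obtain ⟨c, hc⟩ := hξ₀span ⟨p x, ⟨x, rfl⟩⟩
      have hc' : c • (ξ₀ : H) = p x := congrArg Subtype.val hc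
      have h2 : p x = (c * ‖(ξ₀ : H)‖) • ξ := by
        rw [← hc', hξdef, smul_smul, mul_assoc, mul_inv_cancel₀ hn0, mul_one]
      have h3 : ⟪ξ, p x⟫_ℂ = c * ‖(ξ₀ : H)‖ := by
        rw [h2, inner_smul_right, hξself, mul_one]
      have h4 : ⟪ξ, x⟫_ℂ = c * ‖(ξ₀ : H)‖ := by
        rw [← h3, ← hpS, hpξ]
      rw [h2, h4]
  have hξself : ⟪ξ, ξ⟫_ℂ = 1 := by
    rw [inner_self_eq_norm_sq_to_K, hξnorm]; norm_num
  have hpξ : p ξ = ξ := by rw [hpx ξ, hξself, one_smul]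
  -- the vector η₀
  set η₀ : H := e ξ - p (e ξ) with hη₀def
  have hpη₀ : p η₀ = 0 := by rw [hη₀def, map_sub, hp2', sub_self]
  have hξη₀ : ⟪ξ, η₀⟫_ℂ = 0 := by rw [← hpξ, hpS, hpη₀, inner_zero_right]
  have hη₀ξ : ⟪η₀, ξ⟫_ℂ = 0 := by rw [← inner_conj_symm, hξη₀, map_zero]
  -- pointwise formula for d
  have hdx : ∀ x : H, (p * e * (1 - p) + (1 - p) * e * p) x = ⟪η₀, x⟫_ℂ • ξ + ⟪ξ, x⟫_ℂ • η₀ := by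
    intro x
    have h1 : (p * e * (1 - p)) x = ⟪η₀, x⟫_ℂ • ξ := by
      simp only [ContinuousLinearMap.mul_apply, ContinuousLinearMap.sub_apply,
        ContinuousLinearMap.one_apply]
      rw [hpx (e (x - p x))]
      congr 1
      rw [← heS, inner_sub_right, ← hpS, hη₀def, inner_sub_left, heS]
    have h2 : ((1 - p) * e * p) x = ⟪ξ, x⟫_ℂ • η₀ := by
      simp only [ContinuousLinearMap.mul_apply, ContinuousLinearMap.sub_apply,
        ContinuousLinearMap.one_apply]
      rw [hpx x, map_smul, map_smul, hη₀def, smul_sub]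
    simp only [ContinuousLinearMap.add_apply, h1, h2]
  -- η₀ ≠ 0
  have hη₀ne : η₀ ≠ 0 := by
    intro h0
    apply hpe
    have hd0 : p * e * (1 - p) + (1 - p) * e * p = 0 := by
      ext x
      rw [hdx x, h0]
      simp
    have h1 : p * e * (1 - p) = 0 := by
      have h := congrArg (fun z => p * z) hd0
      simp only [mul_add, mul_zero] at h
      calc p * e * (1 - p) = p * (p * e * (1 - p)) + p * ((1 - p) * e * p) := by
            have hcalc : p * (p * e * (1 - p)) = p * e * (1 - p) := by
              rw [show p * (p * e * (1 - p)) = (p * p) * e * (1 - p) by noncomm_ring, hpp]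
            have hcalc2 : p * ((1 - p) * e * p) = 0 := by
              rw [show p * ((1 - p) * e * p) = (p * (1 - p)) * e * p by noncomm_ring]
              rw [show p * (1 - p) = p - p * p by noncomm_ring, hpp, sub_self]
              noncomm_ring
            rw [hcalc, hcalc2, add_zero]
        _ = 0 := h
    have h2 : (1 - p) * e * p = 0 := by
      have := hd0
      rw [h1, zero_add] at this
      exact this
    have e1 : p * e = p * e * p := by
      have hx : p * e * (1 - p) = p * e - p * e * p := by noncomm_ring
      rw [hx] at h1
      exact sub_eq_zero.mp h1
    have e2 : e * p = p * e * p := by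
      have hx : (1 - p) * e * p = e * p - p * e * p := by noncomm_ring
      rw [hx] at h2
      exact sub_eq_zero.mp h2
    rw [e1, ← e2]
  -- the unit vector η and the rank-one projection q
  set c : ℝ := ‖η₀‖ ^ 2 with hcdef
  have hc : 0 < c := by
    rw [hcdef]
    exact pow_pos (norm_pos_iff.mpr hη₀ne) 2
  have hnη₀ : (‖η₀‖ : ℂ) ≠ 0 := by exact_mod_cast norm_ne_zero_iff.mpr hη₀ne
  set η : H := (‖η₀‖ : ℂ)⁻¹ • η₀ with hηdef
  have hηnorm : ‖η‖ = 1 := by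
    rw [hηdef, norm_smul]
    simp [norm_inv, inv_mul_cancel₀ (norm_ne_zero_iff.mpr hη₀ne)]
  have hηself : ⟪η, η⟫_ℂ = 1 := by
    rw [inner_self_eq_norm_sq_to_K, hηnorm]; norm_num
  have hηne : η ≠ 0 := by
    intro h; rw [h, norm_zero] at hηnorm; norm_num at hηnorm
  have hη₀η : η₀ = (‖η₀‖ : ℂ) • η := by
    rw [hηdef, smul_smul, mul_inv_cancel₀ hnη₀, one_smul]
  have hpη : p η = 0 := by rw [hηdef, map_smul, hpη₀, smul_zero]
  have hξη : ⟪ξ, η⟫_ℂ = 0 := by rw [hηdef, inner_smul_right, hξη₀, mul_zero]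
  have hηξ : ⟪η, ξ⟫_ℂ = 0 := by rw [← inner_conj_symm, hξη, map_zero]
  have hη₀self : ⟪η₀, η₀⟫_ℂ = (c : ℂ) := by
    rw [inner_self_eq_norm_sq_to_K, hcdef]
    norm_cast
  clear_value η
  set q : H →L[ℂ] H := (innerSL ℂ η).smulRight η with hqdef
  have hqx : ∀ x : H, q x = ⟪η, x⟫_ℂ • η := fun x => by
    rw [hqdef]; simp [ContinuousLinearMap.smulRight_apply]
  have hq2' : ∀ x, q (q x) = q x := by
    intro x
    rw [hqx x, map_smul, hqx η, hηself, one_smul]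
  have hqS : ∀ x y : H, ⟪q x, y⟫_ℂ = ⟪x, q y⟫_ℂ := by
    intro x y
    rw [hqx, hqx, inner_smul_left, inner_smul_right, inner_conj_symm]
    ring
  have hqη : q η = η := by rw [hqx, hηself, one_smul]
  have hpq' : ∀ x, p (q x) = 0 := fun x => by rw [hqx, map_smul, hpη, smul_zero]
  have hqp' : ∀ x, q (p x) = 0 := fun x => by
    rw [hpx, map_smul, hqx, hηξ, zero_smul, smul_zero]
  have hpq : p * q = 0 := by ext x; exact hpq' x
  have hqp : q * p = 0 := by ext x; exact hqp' x
  have hqq : q * q = q := by ext x; exact hq2' x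
  -- η₀-smul expansion
  have hη₀smul : ∀ x : H, ⟪η₀, x⟫_ℂ • η₀ = (c : ℂ) • (⟪η, x⟫_ℂ • η) := by
    intro x
    rw [hη₀η, inner_smul_left, Complex.conj_ofReal, smul_smul, smul_smul]
    congr 1
    rw [hcdef]; push_cast; ring
  -- the operator B
  set B : H →L[ℂ] H := ((Real.sqrt c : ℝ) : ℂ) • (p + q) with hBdef
  have hsc : ((Real.sqrt c : ℝ) : ℂ) * ((Real.sqrt c : ℝ) : ℂ) = (c : ℂ) := by
    push_cast
    rw [← Complex.ofReal_mul, Real.mul_self_sqrt hc.le]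
  have hBB : B * B = (c : ℂ) • (p + q) := by
    rw [hBdef, smul_mul_smul_comm, hsc]
    congr 1
    rw [add_mul, mul_add, mul_add, hpp, hqq, hpq, hqp]
    abel
  have hPP : ∀ x, (p + q) ((p + q) x) = (p + q) x := by
    intro x
    simp only [ContinuousLinearMap.add_apply, map_add]
    rw [hp2', hq2', hpq' x, hqp' x]
    abel
  have hPS : ∀ x y : H, ⟪(p + q) x, y⟫_ℂ = ⟪x, (p + q) y⟫_ℂ := by
    intro x y
    simp only [ContinuousLinearMap.add_apply, inner_add_left, inner_add_right, hpS, hqS]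
  -- d squared
  have hd2 : (p * e * (1 - p) + (1 - p) * e * p) ^ 2 = (c : ℂ) • (p + q) := by
    rw [pow_two]
    ext x
    rw [ContinuousLinearMap.mul_apply, hdx x, hdx (⟪η₀, x⟫_ℂ • ξ + ⟪ξ, x⟫_ℂ • η₀)]
    rw [inner_add_right, inner_add_right, inner_smul_right, inner_smul_right,
      inner_smul_right, inner_smul_right, hη₀ξ, hξη₀, hη₀self, hξself]
    simp only [mul_zero, mul_one, zero_add, add_zero]
    rw [ContinuousLinearMap.smul_apply, ContinuousLinearMap.add_apply, hpx x, hqx x,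
      smul_add, hη₀smul x]
    simp only [smul_smul]
    rw [mul_comm ⟪ξ, x⟫_ℂ ((c : ℝ) : ℂ)]
  have hB2 : B ^ 2 = (c : ℂ) • (p + q) := by rw [pow_two]; exact hBB
  -- positivity of B
  have hBpos : (0 : H →L[ℂ] H) ≤ B := by
    rw [ContinuousLinearMap.nonneg_iff_isPositive]
    constructor
    · show (B : H →ₗ[ℂ] H).IsSymmetric
      intro x y
      show ⟪B x, y⟫_ℂ = ⟪x, B y⟫_ℂ
      rw [hBdef]
      simp only [ContinuousLinearMap.smul_apply, inner_smul_left, inner_smul_right,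
        Complex.conj_ofReal]
      rw [hPS]
    · intro x
      have : B.reApplyInnerSelf x = Complex.re ⟪B x, x⟫_ℂ := rfl
      rw [this, hBdef]
      simp only [ContinuousLinearMap.smul_apply, inner_smul_left, Complex.conj_ofReal,
        ContinuousLinearMap.add_apply, inner_add_left]
      rw [hpx x, hqx x, inner_smul_left, inner_smul_left,
        ← Complex.normSq_eq_conj_mul_self, ← Complex.normSq_eq_conj_mul_self]
      rw [← Complex.ofReal_add, ← Complex.ofReal_mul, Complex.ofReal_re]
      exact mul_nonneg (Real.sqrt_nonneg _)
        (add_nonneg (Complex.normSq_nonneg _) (Complex.normSq_nonneg _))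
  -- b = B
  have hbB : b = B := by
    calc b = CFC.sqrt (b ^ 2) := (CFC.sqrt_sq b hb0).symm
      _ = CFC.sqrt (B ^ 2) := by rw [hb2, hd2, hB2]
      _ = B := CFC.sqrt_sq B hBpos
  -- the vector w = k ξ
  set w : H := k ξ with hwdef
  have hww : ⟪w, w⟫_ℂ = 1 := by rw [hwdef, hkS, hk2', hξself]
  have hwnorm : ‖w‖ = 1 := by
    have h := hww
    rw [inner_self_eq_norm_sq_to_K, ← RCLike.ofReal_one (K := ℂ), ← RCLike.ofReal_pow,
      RCLike.ofReal_inj] at h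
    nlinarith [norm_nonneg w]
  have hvx : ∀ x : H, (k * p * k) x = ⟪w, x⟫_ℂ • w := by
    intro x
    simp only [ContinuousLinearMap.mul_apply]
    rw [hpx (k x), map_smul, hkS, hwdef]
  -- b w = ‖η₀‖ • η
  have hbw : b w = (‖η₀‖ : ℂ) • η := by
    rw [hwdef, ← ContinuousLinearMap.mul_apply, ← hbk, hdx ξ, hη₀ξ, hξself, zero_smul,
      one_smul, zero_add, ← hη₀η]
  have hPw : (p + q) w = η := by
    have h1 : ((Real.sqrt c : ℝ) : ℂ) • ((p + q) w) = (‖η₀‖ : ℂ) • η := by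
      rw [← ContinuousLinearMap.smul_apply, ← hBdef, ← hbB, hbw]
    have hsqc : Real.sqrt c = ‖η₀‖ := by
      rw [hcdef, Real.sqrt_sq (norm_nonneg η₀)]
    rw [hsqc] at h1
    exact smul_right_injective H hnη₀ h1
  have hwη : w = η := by
    have key := aux_proj_inner (p + q) hPS hPP w
    rw [hPw, hww, hηself, sub_self] at key
    have h0 : w - η = 0 := inner_self_eq_zero.mp key
    rw [← sub_eq_zero]
    exact h0
  have hvq : k * p * k = q := by
    ext x
    rw [hvx x, hwη, hqx x]
  -- norm bound : c ≤ 1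
  have hc1 : c ≤ 1 := by
    have key := aux_proj_inner p hpS hp2' (e ξ)
    have h2 : ‖η₀‖ ^ 2 = ‖e ξ‖ ^ 2 - ‖p (e ξ)‖ ^ 2 := by
      rw [inner_self_eq_norm_sq_to_K, inner_self_eq_norm_sq_to_K, inner_self_eq_norm_sq_to_K,
        ← RCLike.ofReal_pow, ← RCLike.ofReal_pow, ← RCLike.ofReal_pow, ← RCLike.ofReal_sub,
        RCLike.ofReal_inj] at key
      exact key
    have h3 : ‖e ξ‖ ≤ 1 := by
      have he_norm : ‖e‖ ≤ 1 := (CStarAlgebra.norm_le_one_iff_of_nonneg e he0).mpr he1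
      calc ‖e ξ‖ ≤ ‖e‖ * ‖ξ‖ := e.le_opNorm ξ
        _ ≤ 1 * 1 := by
            apply mul_le_mul he_norm (le_of_eq hξnorm) (norm_nonneg ξ) zero_le_one
        _ = 1 := by norm_num
    have h4 : ‖e ξ‖ ^ 2 ≤ 1 := by nlinarith [norm_nonneg (e ξ)]
    rw [hcdef]
    nlinarith [sq_nonneg ‖p (e ξ)‖]
  -- conclusion
  have hrange : Module.finrank ℂ (LinearMap.range (q : H →ₗ[ℂ] H)) = 1 := by
    have hr : LinearMap.range (q : H →ₗ[ℂ] H) = Submodule.span ℂ {η} := by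
      apply le_antisymm
      · rintro y ⟨x, rfl⟩
        rw [show (q : H →ₗ[ℂ] H) x = ⟪η, x⟫_ℂ • η from hqx x]
        exact Submodule.smul_mem _ _ (Submodule.mem_span_singleton_self η)
      · rw [Submodule.span_singleton_le_iff_mem]
        exact ⟨η, hqη⟩
    rw [hr]
    exact finrank_span_singleton hηne
  refine ⟨⟨?_, ?_, ?_⟩, ?_, Real.sqrt c, Real.sqrt_pos.mpr hc, Real.sqrt_le_one.mpr hc1, ?_⟩
  · rw [hvq, ContinuousLinearMap.isSelfAdjoint_iff_isSymmetric]
    exact fun x y => hqS x y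
  · rw [hvq, pow_two, hqq]
  · rw [hvq]; exact hrange
  · rw [hvq]; exact hpq
  · rw [hvq, hbB, hBdef]
    ext x
    rw [ContinuousLinearMap.smul_apply, ContinuousLinearMap.smul_apply,
      RCLike.real_smul_eq_coe_smul (K := ℂ)]
    rfl
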